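/- Define z(β) = e·β + log β and 𝒮(β) = β·(z(β) + z(β)·exp(−z(β)) + 2·exp(−z(β)) − 2) for β > 0. Then 𝒮(e^{−1}) = 0, the first and second derivatives of 𝒮 at β = e^{−1} both vanish, and the third derivative of 𝒮 at β = e^{−1} equals 8e². -/

import Mathlib

open Real Filter Set Topology

noncomputable def ksGz (x : ℝ) : ℝ := Real.exp 1 * x + Real.log x
noncomputable def ksEz (x : ℝ) : ℝ := Real.exp (-(ksGz x))

noncomputable def ksF0 (x : ℝ) : ℝ :=
  x * (ksGz x + ksGz x * ksEz x + 2 * ksEz x - 2)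

noncomputable def ksF1 (x : ℝ) : ℝ :=
  (ksGz x + ksGz x * ksEz x + 2 * ksEz x - 2)
    + x * ((1 - (ksGz x + 1) * ksEz x) * (Real.exp 1 + x⁻¹))

noncomputable def ksF2 (x : ℝ) : ℝ :=
  2 * ((1 - (ksGz x + 1) * ksEz x) * (Real.exp 1 + x⁻¹))
    + x * (ksGz x * ksEz x * (Real.exp 1 + x⁻¹) ^ 2
        + (1 - (ksGz x + 1) * ksEz x) * (-(x ^ 2)⁻¹))

noncomputable def ksF3 (x : ℝ) : ℝ :=
  3 * (ksGz x * ksEz x * (Real.exp 1 + x⁻¹) ^ 2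
        + (1 - (ksGz x + 1) * ksEz x) * (-(x ^ 2)⁻¹))
    + x * ((1 - ksGz x) * ksEz x * (Real.exp 1 + x⁻¹) ^ 3
        + 3 * (ksGz x * ksEz x) * (Real.exp 1 + x⁻¹) * (-(x ^ 2)⁻¹)
        + (1 - (ksGz x + 1) * ksEz x) * (2 * x / (x ^ 2) ^ 2))

lemma ksGz_hasDerivAt {x : ℝ} (hx : 0 < x) :
    HasDerivAt ksGz (Real.exp 1 + x⁻¹) x := by
  have h := (((hasDerivAt_id x).const_mul (Real.exp 1)).add (Real.hasDerivAt_log hx.ne'))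
  refine h.congr_deriv ?_
  ring

lemma ksEz_hasDerivAt {x : ℝ} (hx : 0 < x) :
    HasDerivAt ksEz (-(Real.exp 1 + x⁻¹) * ksEz x) x := by
  have h := ((ksGz_hasDerivAt hx).neg).exp
  refine h.congr_deriv ?_
  unfold ksEz
  simp only [Pi.neg_apply]
  ring

lemma ksG1_hasDerivAt {x : ℝ} (hx : 0 < x) :
    HasDerivAt (fun t : ℝ => Real.exp 1 + t⁻¹) (-(x ^ 2)⁻¹) x :=
  (hasDerivAt_inv hx.ne').const_add (Real.exp 1)

lemma ksF0_hasDerivAt {x : ℝ} (hx : 0 < x) : HasDerivAt ksF0 (ksF1 x) x := by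
  have hg := ksGz_hasDerivAt hx
  have he := ksEz_hasDerivAt hx
  have inner : HasDerivAt (fun t => ksGz t + ksGz t * ksEz t + 2 * ksEz t - 2)
      ((Real.exp 1 + x⁻¹) + ((Real.exp 1 + x⁻¹) * ksEz x
        + ksGz x * (-(Real.exp 1 + x⁻¹) * ksEz x))
        + 2 * (-(Real.exp 1 + x⁻¹) * ksEz x)) x :=
    ((hg.add (hg.mul he)).add (he.const_mul 2)).sub_const 2
  have h := (hasDerivAt_id x).mul inner
  refine h.congr_deriv ?_
  unfold ksF1
  simp only [id_eq]
  ring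

lemma ksF1_hasDerivAt {x : ℝ} (hx : 0 < x) : HasDerivAt ksF1 (ksF2 x) x := by
  have hg := ksGz_hasDerivAt hx
  have he := ksEz_hasDerivAt hx
  have hg1 := ksG1_hasDerivAt hx
  have inner : HasDerivAt (fun t => ksGz t + ksGz t * ksEz t + 2 * ksEz t - 2)
      ((Real.exp 1 + x⁻¹) + ((Real.exp 1 + x⁻¹) * ksEz x
        + ksGz x * (-(Real.exp 1 + x⁻¹) * ksEz x))
        + 2 * (-(Real.exp 1 + x⁻¹) * ksEz x)) x :=
    ((hg.add (hg.mul he)).add (he.const_mul 2)).sub_const 2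
  have hfac : HasDerivAt (fun t => (1 - (ksGz t + 1) * ksEz t) * (Real.exp 1 + t⁻¹))
      ((-((Real.exp 1 + x⁻¹) * ksEz x + (ksGz x + 1) * (-(Real.exp 1 + x⁻¹) * ksEz x)))
        * (Real.exp 1 + x⁻¹)
        + (1 - (ksGz x + 1) * ksEz x) * (-(x ^ 2)⁻¹)) x :=
    (((hg.add_const 1).mul he).const_sub 1).mul hg1
  have h := inner.add ((hasDerivAt_id x).mul hfac)
  refine h.congr_deriv ?_
  unfold ksF2
  simp only [id_eq]
  ring

lemma ksF2_hasDerivAt {x : ℝ} (hx : 0 < x) : HasDerivAt ksF2 (ksF3 x) x := by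
  have hg := ksGz_hasDerivAt hx
  have he := ksEz_hasDerivAt hx
  have hg1 := ksG1_hasDerivAt hx
  have hx2 : (x : ℝ) ^ 2 ≠ 0 := pow_ne_zero 2 hx.ne'
  -- derivative of -(x^2)⁻¹ is 2x/(x^2)^2
  have hg2 : HasDerivAt (fun t : ℝ => -(t ^ 2)⁻¹) (2 * x / (x ^ 2) ^ 2) x := by
    have h := ((hasDerivAt_pow 2 x).inv hx2).neg
    refine h.congr_deriv ?_
    simp
    ring
  have hfac : HasDerivAt (fun t => (1 - (ksGz t + 1) * ksEz t) * (Real.exp 1 + t⁻¹))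
      ((-((Real.exp 1 + x⁻¹) * ksEz x + (ksGz x + 1) * (-(Real.exp 1 + x⁻¹) * ksEz x)))
        * (Real.exp 1 + x⁻¹)
        + (1 - (ksGz x + 1) * ksEz x) * (-(x ^ 2)⁻¹)) x :=
    (((hg.add_const 1).mul he).const_sub 1).mul hg1
  have hg1sq : HasDerivAt (fun t : ℝ => (Real.exp 1 + t⁻¹) ^ 2)
      (2 * (Real.exp 1 + x⁻¹) ^ 1 * (-(x ^ 2)⁻¹)) x := hg1.pow 2
  have hA : HasDerivAt (fun t => ksGz t * ksEz t * (Real.exp 1 + t⁻¹) ^ 2)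
      (((Real.exp 1 + x⁻¹) * ksEz x + ksGz x * (-(Real.exp 1 + x⁻¹) * ksEz x))
          * (Real.exp 1 + x⁻¹) ^ 2
        + ksGz x * ksEz x * (2 * (Real.exp 1 + x⁻¹) ^ 1 * (-(x ^ 2)⁻¹))) x :=
    (hg.mul he).mul hg1sq
  have hB : HasDerivAt (fun t => (1 - (ksGz t + 1) * ksEz t) * (-(t ^ 2)⁻¹))
      ((-((Real.exp 1 + x⁻¹) * ksEz x + (ksGz x + 1) * (-(Real.exp 1 + x⁻¹) * ksEz x)))
          * (-(x ^ 2)⁻¹)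
        + (1 - (ksGz x + 1) * ksEz x) * (2 * x / (x ^ 2) ^ 2)) x :=
    (((hg.add_const 1).mul he).const_sub 1).mul hg2
  have h := (hfac.const_mul 2).add ((hasDerivAt_id x).mul (hA.add hB))
  refine h.congr_deriv ?_
  unfold ksF3
  simp only [id_eq, Pi.add_apply]
  field_simp
  ring

lemma ks_deriv_eq {x : ℝ} (hx : 0 < x) {f g : ℝ → ℝ}
    (hfg : ∀ y ∈ Set.Ioi (0 : ℝ), f y = g y) : deriv f x = deriv g x := by
  apply Filter.EventuallyEq.deriv_eq
  filter_upwards [Ioi_mem_nhds hx] with y hy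
  exact hfg y hy

theorem karpSipser_fluid_surplus_derivatives (z 𝒮 : ℝ → ℝ)
    (hz : ∀ β : ℝ, z β = Real.exp 1 * β + Real.log β)
    (hS : ∀ β : ℝ, 𝒮 β =
      β * (z β + z β * Real.exp (-(z β)) + 2 * Real.exp (-(z β)) - 2)) :
    𝒮 (Real.exp 1)⁻¹ = 0 ∧
    deriv 𝒮 (Real.exp 1)⁻¹ = 0 ∧
    iteratedDeriv 2 𝒮 (Real.exp 1)⁻¹ = 0 ∧
    iteratedDeriv 3 𝒮 (Real.exp 1)⁻¹ = 8 * (Real.exp 1) ^ 2 := by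
  have hSe : 𝒮 = ksF0 := by
    funext β
    rw [hS β, hz β]
    rfl
  subst hSe
  set p : ℝ := (Real.exp 1)⁻¹ with hp
  have hppos : 0 < p := inv_pos.mpr (Real.exp_pos 1)
  have hd1 : ∀ y ∈ Set.Ioi (0 : ℝ), deriv ksF0 y = ksF1 y := fun y hy =>
    (ksF0_hasDerivAt hy).deriv
  have hd2 : ∀ y ∈ Set.Ioi (0 : ℝ), deriv (deriv ksF0) y = ksF2 y := by
    intro y hy
    rw [ks_deriv_eq hy hd1]
    exact (ksF1_hasDerivAt hy).deriv
  have hd3 : deriv (deriv (deriv ksF0)) p = ksF3 p := by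
    rw [ks_deriv_eq hppos hd2]
    exact (ksF2_hasDerivAt hppos).deriv
  -- evaluations at p
  have hgz : ksGz p = 0 := by
    unfold ksGz
    rw [hp, Real.log_inv, Real.log_exp, mul_inv_cancel₀ (Real.exp_ne_zero 1)]
    ring
  have hez : ksEz p = 1 := by
    unfold ksEz
    rw [hgz]
    simp
  have hpinv : p⁻¹ = Real.exp 1 := by rw [hp, inv_inv]
  refine ⟨?_, ?_, ?_, ?_⟩
  · unfold ksF0; rw [hgz, hez]; ring
  · rw [hd1 p hppos]
    unfold ksF1; rw [hgz, hez, hpinv]; ring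
  · rw [iteratedDeriv_succ, iteratedDeriv_one, hd2 p hppos]
    unfold ksF2; rw [hgz, hez, hpinv]; ring
  · rw [iteratedDeriv_succ, iteratedDeriv_succ, iteratedDeriv_one, hd3]
    unfold ksF3
    rw [hgz, hez, hpinv, hp]
    have h2 : ((Real.exp 1)⁻¹ ^ 2)⁻¹ = Real.exp 1 ^ 2 := by
      rw [← inv_pow, inv_inv]
    rw [h2]
    have hne := Real.exp_ne_zero 1
    field_simp
    ring
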